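/- arXiv:0708.0245 — 5 statements merged into one kernel-verified Lean document; each statement's English description precedes it below -/
import Mathlib

section
/- Let Λ be a row-finite, locally convex k-graph. For every x ∈ Λ^{≤∞} and m ≤ n ∈ ℕ^k: (i) (m − m∧d(x)) ∧ d(σ^{m∧d(x)}(x)) = 0, and (ii) (x;(m,n)) ≈ (σ^{m∧d(x)}(x); (m − m∧d(x), n − m∧d(x))). Consequently, every element (x;(m,n)) of P_Λ is ≈-equivalent to an element of the form (y;(p, p + (n−m))) with y ∈ Λ^{≤∞}, p ∈ ℕ^k and p ∧ d(y) = 0. -/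
open scoped ENat

/-- `q ≤ m` coordinatewise, where `q ∈ ℕ^k` and `m ∈ (ℕ ∪ {∞})^k`. -/
def leDeg (k : ℕ) (q : Fin k → ℕ) (m : Fin k → ℕ∞) : Prop :=
  ∀ i, (q i : ℕ∞) ≤ m i

/-- The coordinatewise minimum `m ∧ d` of `m ∈ ℕ^k` and `d ∈ (ℕ ∪ {∞})^k`,
viewed as an element of `ℕ^k`. -/
noncomputable def wedge {k : ℕ} (m : Fin k → ℕ) (dx : Fin k → ℕ∞) : Fin k → ℕ :=
  fun i => ((m i : ℕ∞) ⊓ dx i).toNat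

lemma wedge_coe {k : ℕ} (m : Fin k → ℕ) (dx : Fin k → ℕ∞) (i : Fin k) :
    ((wedge m dx i : ℕ)  : ℕ∞) = (m i : ℕ∞) ⊓ dx i := by
  have h : (m i : ℕ∞) ⊓ dx i ≠ ⊤ :=
    (inf_le_left.trans_lt (ENat.coe_lt_top (m i))).ne
  simpa [wedge] using ENat.coe_toNat h

lemma wedge_leDeg {k : ℕ} (m : Fin k → ℕ) (dx : Fin k → ℕ∞) :
    leDeg k (wedge m dx) dx := by
  intro i
  rw [wedge_coe]
  exact inf_le_right

/-- The data of a countable-free small category with a degree map: the underlying data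
of a `k`-graph. -/
structure KGraphData (k : ℕ) where
  Obj : Type
  Mor : Type
  r : Mor → Obj
  s : Mor → Obj
  idm : Obj → Mor
  comp : Mor → Mor → Mor
  d : Mor → Fin k → ℕ

/-- The axioms making `Λ` a `k`-graph: a small category together with a degree functor
`d : Λ → ℕ^k` satisfying the factorisation property. (Composition `comp f g` is only
constrained when `s f = r g`.) -/
structure IsKGraph {k : ℕ} (Λ : KGraphData k) : Prop where
  r_id : ∀ v, Λ.r (Λ.idm v) = v
  s_id : ∀ v, Λ.s (Λ.idm v) = v
  id_comp : ∀ f, Λ.comp (Λ.idm (Λ.r f)) f = f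
  comp_id : ∀ f, Λ.comp f (Λ.idm (Λ.s f)) = f
  r_comp : ∀ f g, Λ.s f = Λ.r g → Λ.r (Λ.comp f g) = Λ.r f
  s_comp : ∀ f g, Λ.s f = Λ.r g → Λ.s (Λ.comp f g) = Λ.s g
  assoc : ∀ f g h, Λ.s f = Λ.r g → Λ.s g = Λ.r h →
    Λ.comp (Λ.comp f g) h = Λ.comp f (Λ.comp g h)
  d_id : ∀ v, Λ.d (Λ.idm v) = 0
  d_comp : ∀ f g, Λ.s f = Λ.r g → Λ.d (Λ.comp f g) = Λ.d f + Λ.d g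
  factor : ∀ (f : Λ.Mor) (m n : Fin k → ℕ), Λ.d f = m + n →
    ∃! p : Λ.Mor × Λ.Mor, Λ.s p.1 = Λ.r p.2 ∧ Λ.d p.1 = m ∧ Λ.d p.2 = n ∧
      Λ.comp p.1 p.2 = f

/-- `Λ` is row-finite: `vΛ^n` is finite for every vertex `v` and degree `n`. -/
def RowFinite {k : ℕ} (Λ : KGraphData k) : Prop :=
  ∀ (v : Λ.Obj) (n : Fin k → ℕ), {f : Λ.Mor | Λ.r f = v ∧ Λ.d f = n}.Finite

/-- `Λ` is locally convex. -/
def LocallyConvex {k : ℕ} (Λ : KGraphData k) : Prop :=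
  ∀ (i j : Fin k), i ≠ j → ∀ lam mu : Λ.Mor,
    Λ.d lam = Pi.single i 1 → Λ.d mu = Pi.single j 1 → Λ.r lam = Λ.r mu →
    (∃ f, Λ.r f = Λ.s lam ∧ Λ.d f = Pi.single j 1) ∧
    (∃ g, Λ.r g = Λ.s mu ∧ Λ.d g = Pi.single i 1)

/-- A boundary path of `Λ`: a degree-preserving functor `x : Ω_{k,m} → Λ`
(encoded by its vertex map `vert` and segment map `seg`, constrained on
pairs `p ≤ q ≤ m = deg`) such that whenever `p ≤ m` and `p i = m i`,
`x(p)Λ^{e_i} = ∅`. -/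
structure BPath (k : ℕ) (Λ : KGraphData k) where
  deg : Fin k → ℕ∞
  vert : (Fin k → ℕ) → Λ.Obj
  seg : (Fin k → ℕ) → (Fin k → ℕ) → Λ.Mor
  seg_r : ∀ p q, p ≤ q → leDeg k q deg → Λ.r (seg p q) = vert p
  seg_s : ∀ p q, p ≤ q → leDeg k q deg → Λ.s (seg p q) = vert q
  seg_deg : ∀ p q, p ≤ q → leDeg k q deg → Λ.d (seg p q) = q - p
  seg_id : ∀ p, leDeg k p deg → seg p p = Λ.idm (vert p)
  seg_comp : ∀ p q t, p ≤ q → q ≤ t → leDeg k t deg →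
    Λ.comp (seg p q) (seg q t) = seg p t
  boundary : ∀ (p : Fin k → ℕ) (i : Fin k), leDeg k p deg → (p i : ℕ∞) = deg i →
    ∀ e : Λ.Mor, Λ.r e = vert p → Λ.d e ≠ Pi.single i 1

/-- Equality of boundary paths as functors: same degree and the same segments on
the common (valid) domain. -/
def BPath.eqv {k : ℕ} {Λ : KGraphData k} (x y : BPath k Λ) : Prop :=
  x.deg = y.deg ∧ ∀ p q, p ≤ q → leDeg k q x.deg → x.seg p q = y.seg p q

lemma leDeg_add {k : ℕ} {n q : Fin k → ℕ} {D : Fin k → ℕ∞}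
    (hn : leDeg k n D) (hq : leDeg k q (fun i => D i - (n i : ℕ∞))) :
    leDeg k (q + n) D := by
  intro i
  have hqi := hq i
  have hni := hn i
  by_cases hD : D i = ⊤
  · rw [hD]; exact le_top
  · lift D i to ℕ using hD with a ha
    rw [show ((a : ℕ∞) - (n i : ℕ∞)) = ((a - n i : ℕ) : ℕ∞) by
      exact_mod_cast (ENat.coe_sub a (n i)).symm] at hqi
    have h1 : q i ≤ a - n i := by exact_mod_cast hqi
    have h2 : n i ≤ a := by exact_mod_cast hni
    have h3 : q i + n i ≤ a := by omega
    show ((q i + n i : ℕ) : ℕ∞) ≤ (a : ℕ∞)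
    exact_mod_cast h3

/-- The shift `σ^n(x)` of a boundary path `x` by `n ≤ d(x)`. -/
def BPath.shift {k : ℕ} {Λ : KGraphData k} (x : BPath k Λ) (n : Fin k → ℕ)
    (h : leDeg k n x.deg) : BPath k Λ where
  deg := fun i => x.deg i - (n i : ℕ∞)
  vert := fun p => x.vert (p + n)
  seg := fun p q => x.seg (p + n) (q + n)
  seg_r := fun p q hpq hq =>
    x.seg_r (p + n) (q + n) (add_le_add_left hpq n) (leDeg_add h hq)
  seg_s := fun p q hpq hq =>
    x.seg_s (p + n) (q + n) (add_le_add_left hpq n) (leDeg_add h hq)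
  seg_deg := by
    intro p q hpq hq
    rw [x.seg_deg (p + n) (q + n) (add_le_add_left hpq n) (leDeg_add h hq)]
    funext i
    simp only [Pi.sub_apply, Pi.add_apply]
    omega
  seg_id := by
    intro p hp
    show x.seg (p + n) (p + n) = _
    rw [x.seg_id (p + n) (leDeg_add h hp)]
  seg_comp := fun p q t hpq hqt ht =>
    x.seg_comp (p + n) (q + n) (t + n) (add_le_add_left hpq n)
      (add_le_add_left hqt n) (leDeg_add h ht)
  boundary := by
    intro p i hp hpi e he
    refine x.boundary (p + n) i (leDeg_add h hp) ?_ e he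
    have hni := h i
    have hpi' : (p i : ℕ∞) = x.deg i - (n i : ℕ∞) := hpi
    clear hpi
    by_cases hD : x.deg i = ⊤
    · rw [hD] at hpi'
      simp at hpi'
    · lift x.deg i to ℕ using hD with a ha
      rw [show ((a : ℕ∞) - (n i : ℕ∞)) = ((a - n i : ℕ) : ℕ∞) by
        exact_mod_cast (ENat.coe_sub a (n i)).symm] at hpi'
      have h1 : p i = a - n i := by exact_mod_cast hpi'
      have h2 : n i ≤ a := by exact_mod_cast hni
      have h3 : p i + n i = a := by omega
      show ((p i + n i : ℕ) : ℕ∞) = (a : ℕ∞)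
      exact_mod_cast h3

/-- The relation `∼` on `V_Λ = Λ^{≤∞} × ℕ^k`. -/
def VRel {k : ℕ} {Λ : KGraphData k} (a b : BPath k Λ × (Fin k → ℕ)) : Prop :=
  a.1.vert (wedge a.2 a.1.deg) = b.1.vert (wedge b.2 b.1.deg) ∧
  a.2 - wedge a.2 a.1.deg = b.2 - wedge b.2 b.1.deg

/-- The relation `≈` on `P_Λ = {(x;(m,n)) : x ∈ Λ^{≤∞}, m ≤ n}`
(as a relation on all triples). -/
def PRel {k : ℕ} {Λ : KGraphData k}
    (a b : BPath k Λ × (Fin k → ℕ) × (Fin k → ℕ)) : Prop :=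
  a.1.seg (wedge a.2.1 a.1.deg) (wedge a.2.2 a.1.deg) =
    b.1.seg (wedge b.2.1 b.1.deg) (wedge b.2.2 b.1.deg) ∧
  a.2.1 - wedge a.2.1 a.1.deg = b.2.1 - wedge b.2.1 b.1.deg ∧
  a.2.2 - a.2.1 = b.2.2 - b.2.1

/-- `z` is the concatenation `λ x` of the morphism `lam` with the boundary path `x`:
`z` has degree `d(lam) + d(x)`, `z(0, d lam) = lam`, and
`z(d lam, d lam + p) = x(0, p)` for all `p ≤ d(x)`. -/
def IsConcat {k : ℕ} (Λ : KGraphData k) (lam : Λ.Mor) (x z : BPath k Λ) : Prop :=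
  z.deg = (fun i => (Λ.d lam i : ℕ∞) + x.deg i) ∧
  z.seg 0 (Λ.d lam) = lam ∧
  ∀ p, leDeg k p x.deg → z.seg (Λ.d lam) (Λ.d lam + p) = x.seg 0 p

/-- `Λ` has local periodicity `m, n` at the vertex `v`: for every boundary path
`x ∈ vΛ^{≤∞}`, `m − m∧d(x) = n − n∧d(x)` and `σ^{m∧d(x)}(x) = σ^{n∧d(x)}(x)`. -/
def LocalPeriodicity {k : ℕ} (Λ : KGraphData k) (m n : Fin k → ℕ) (v : Λ.Obj) : Prop :=
  ∀ x : BPath k Λ, x.vert 0 = v →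
    (m - wedge m x.deg = n - wedge n x.deg) ∧
    BPath.eqv (x.shift (wedge m x.deg) (wedge_leDeg m x.deg))
      (x.shift (wedge n x.deg) (wedge_leDeg n x.deg))

lemma inf_coe_eq (m a : ℕ) : (m : ℕ∞) ⊓ (a : ℕ∞) = ((min m a : ℕ) : ℕ∞) := by
  rcases le_total m a with h | h
  · rw [min_eq_left h, inf_eq_left.mpr (by exact_mod_cast h)]
  · rw [min_eq_right h, inf_eq_right.mpr (by exact_mod_cast h)]

lemma wedge_le {k : ℕ} (m : Fin k → ℕ) (dx : Fin k → ℕ∞) (i : Fin k) :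
    wedge m dx i ≤ m i := by
  simp only [wedge]
  by_cases hd : dx i = ⊤
  · simp [hd]
  · lift dx i to ℕ using hd with a ha
    rw [inf_coe_eq, ENat.toNat_coe]
    exact min_le_left _ _

lemma key1' (m : ℕ) (d : ℕ∞) :
    ((↑(m - ((m : ℕ∞) ⊓ d).toNat) : ℕ∞) ⊓ (d - ↑(((m : ℕ∞) ⊓ d).toNat))).toNat = 0 := by
  by_cases hd : d = ⊤
  · subst hd; simp
  · lift d to ℕ using hd with a ha
    rw [inf_coe_eq, ENat.toNat_coe,
      show ((a : ℕ∞) - ((min m a : ℕ) : ℕ∞)) = ((a - min m a : ℕ) : ℕ∞) from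
        (ENat.coe_sub a (min m a)).symm,
      inf_coe_eq, ENat.toNat_coe]
    omega

lemma key2' (m n : ℕ) (d : ℕ∞) (h : m ≤ n) :
    ((↑(n - ((m : ℕ∞) ⊓ d).toNat) : ℕ∞) ⊓ (d - ↑(((m : ℕ∞) ⊓ d).toNat))).toNat
      + ((m : ℕ∞) ⊓ d).toNat = ((n : ℕ∞) ⊓ d).toNat := by
  by_cases hd : d = ⊤
  · subst hd
    rw [show ((m : ℕ∞) ⊓ ⊤) = (m : ℕ∞) from inf_top_eq _, ENat.toNat_coe,
      show ((⊤ : ℕ∞) - (m : ℕ∞)) = ⊤ from ENat.top_sub_coe m,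
      show ((↑(n - m) : ℕ∞) ⊓ ⊤) = (↑(n - m) : ℕ∞) from inf_top_eq _,
      ENat.toNat_coe, show ((n : ℕ∞) ⊓ ⊤) = (n : ℕ∞) from inf_top_eq _, ENat.toNat_coe]
    omega
  · lift d to ℕ using hd with a ha
    rw [inf_coe_eq, ENat.toNat_coe,
      show ((a : ℕ∞) - ((min m a : ℕ) : ℕ∞)) = ((a - min m a : ℕ) : ℕ∞) from
        (ENat.coe_sub a (min m a)).symm,
      inf_coe_eq, ENat.toNat_coe, inf_coe_eq, ENat.toNat_coe]
    omega

lemma key1 {k : ℕ} (m : Fin k → ℕ) (dx : Fin k → ℕ∞) :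
    wedge (m - wedge m dx) (fun i => dx i - (wedge m dx i : ℕ∞)) = 0 := by
  funext i
  simp only [wedge, Pi.sub_apply, Pi.zero_apply]
  exact key1' (m i) (dx i)

lemma key2 {k : ℕ} (m n : Fin k → ℕ) (dx : Fin k → ℕ∞) (hmn : m ≤ n) :
    wedge (n - wedge m dx) (fun i => dx i - (wedge m dx i : ℕ∞)) + wedge m dx
      = wedge n dx := by
  funext i
  simp only [wedge, Pi.sub_apply, Pi.add_apply]
  exact key2' (m i) (n i) (dx i) (hmn i)

/-- `(m − m∧d(x)) ∧ d(σ^{m∧d(x)}(x)) = 0`, and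
`(x;(m,n)) ≈ (σ^{m∧d(x)}(x); (m − m∧d(x), n − m∧d(x)))`; consequently every
element of `P_Λ` is `≈`-equivalent to one of the form `(y;(p, p+(n−m)))` with
`p ∧ d(y) = 0`. -/
theorem prel_normal_form (k : ℕ) (hk : 1 ≤ k) (Λ : KGraphData k)
    (hΛ : IsKGraph Λ) (hrf : RowFinite Λ) (hlc : LocallyConvex Λ)
    (x : BPath k Λ) (m n : Fin k → ℕ) (hmn : m ≤ n) :
    (wedge (m - wedge m x.deg) (x.shift (wedge m x.deg) (wedge_leDeg m x.deg)).deg = 0 ∧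
      PRel (x, m, n)
        (x.shift (wedge m x.deg) (wedge_leDeg m x.deg),
          m - wedge m x.deg, n - wedge m x.deg)) ∧
    ∀ (x' : BPath k Λ) (m' n' : Fin k → ℕ), m' ≤ n' →
      ∃ (y : BPath k Λ) (p : Fin k → ℕ), wedge p y.deg = 0 ∧
        PRel (x', m', n') (y, p, p + (n' - m')) := by
  have main : ∀ (x' : BPath k Λ) (m' n' : Fin k → ℕ), m' ≤ n' →
      wedge (m' - wedge m' x'.deg)
        (x'.shift (wedge m' x'.deg) (wedge_leDeg m' x'.deg)).deg = 0 ∧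
      PRel (x', m', n')
        (x'.shift (wedge m' x'.deg) (wedge_leDeg m' x'.deg),
          m' - wedge m' x'.deg, n' - wedge m' x'.deg) := by
    intro x' m' n' hmn'
    set w := wedge m' x'.deg with hw
    have hDeg : (x'.shift w (wedge_leDeg m' x'.deg)).deg
        = fun i => x'.deg i - (w i : ℕ∞) := rfl
    have h1 : wedge (m' - w) (x'.shift w (wedge_leDeg m' x'.deg)).deg = 0 := by
      rw [hDeg]; exact key1 m' x'.deg
    refine ⟨h1, ?_, ?_, ?_⟩
    · show x'.seg (wedge m' x'.deg) (wedge n' x'.deg)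
        = x'.seg (wedge (m' - w) _ + w) (wedge (n' - w) _ + w)
      rw [hDeg, key1 m' x'.deg, key2 m' n' x'.deg hmn', zero_add]
    · show m' - w = (m' - w) - wedge (m' - w) _
      rw [h1]
      funext i
      simp
    · show n' - m' = (n' - w) - (m' - w)
      funext i
      have ha : w i ≤ m' i := wedge_le m' x'.deg i
      have hb : m' i ≤ n' i := hmn' i
      simp only [Pi.sub_apply]
      omega
  refine ⟨main x m n hmn, ?_⟩
  intro x' m' n' hmn'
  obtain ⟨h1, h2⟩ := main x' m' n' hmn'
  refine ⟨x'.shift (wedge m' x'.deg) (wedge_leDeg m' x'.deg),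
    m' - wedge m' x'.deg, h1, ?_⟩
  have heq : (m' - wedge m' x'.deg) + (n' - m') = n' - wedge m' x'.deg := by
    funext i
    have ha : wedge m' x'.deg i ≤ m' i := wedge_le m' x'.deg i
    have hb : m' i ≤ n' i := hmn' i
    simp only [Pi.sub_apply, Pi.add_apply]
    omega
  rwa [heq]
end

section
/- Let Λ be a row-finite, locally convex k-graph and let v ∈ Λ^0. Suppose x ∈ vΛ^{≤∞} and p ∈ ℕ^k satisfy p ∧ d(x) = 0. Then for every z ∈ vΛ^{≤∞} we have p ∧ d(z) = 0 and (x;(0,p)) ≈ (z;(0,p)). -/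
open scoped ENat

/-- If `x ∈ vΛ^{≤∞}` and `p ∧ d(x) = 0` then for every
`z ∈ vΛ^{≤∞}` we have `p ∧ d(z) = 0` and `(x;(0,p)) ≈ (z;(0,p))`. -/
theorem prel_vertex_const (k : ℕ) (hk : 1 ≤ k) (Λ : KGraphData k)
    (hΛ : IsKGraph Λ) (hrf : RowFinite Λ) (hlc : LocallyConvex Λ)
    (v : Λ.Obj) (x : BPath k Λ) (hx : x.vert 0 = v) (p : Fin k → ℕ)
    (hp : wedge p x.deg = 0) :
    ∀ z : BPath k Λ, z.vert 0 = v →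
      wedge p z.deg = 0 ∧ PRel (x, 0, p) (z, 0, p) := by
  intro z hz
  have hzero : ∀ i, p i = 0 ∨ x.deg i = 0 := by
    intro i
    have hi := congrFun hp i
    simp only [wedge, Pi.zero_apply] at hi
    rcases (ENat.toNat_eq_zero).mp hi with h0 | htop
    · by_contra hc
      push_neg at hc
      have h1 : (0 : ℕ∞) < (p i : ℕ∞) := by exact_mod_cast Nat.pos_of_ne_zero hc.1
      have h2 : (0 : ℕ∞) < x.deg i := pos_iff_ne_zero.mpr hc.2
      exact absurd h0 (lt_inf_iff.mpr ⟨h1, h2⟩).ne'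
    · exact absurd htop ((inf_le_left.trans_lt (ENat.coe_lt_top (p i))).ne)
  have hbd : ∀ i, x.deg i = 0 → z.deg i = 0 := by
    intro i hdi
    by_contra hne
    have h1 : (1 : ℕ∞) ≤ z.deg i := ENat.one_le_iff_ne_zero.mpr hne
    have hle : leDeg k (Pi.single i 1) z.deg := by
      intro j
      rcases eq_or_ne j i with rfl | hji
      · simpa using h1
      · simp [Pi.single_apply, hji]
    have hsle : (0 : Fin k → ℕ) ≤ Pi.single i 1 := fun j => Nat.zero_le _
    have hr := z.seg_r 0 (Pi.single i 1) hsle hle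
    have hd := z.seg_deg 0 (Pi.single i 1) hsle hle
    have hb := x.boundary 0 i (fun j => by simp) (by simp [hdi])
      (z.seg 0 (Pi.single i 1)) (by rw [hr, hz, hx])
    exact hb (by simpa using hd)
  have hpz : wedge p z.deg = 0 := by
    funext i
    rcases hzero i with h | h
    · simp [wedge, h]
    · simp [wedge, hbd i h]
  refine ⟨hpz, ?_, ?_, rfl⟩
  · show x.seg (wedge 0 x.deg) (wedge p x.deg) = z.seg (wedge 0 z.deg) (wedge p z.deg)
    have hw0x : wedge 0 x.deg = 0 := by funext i; simp [wedge]
    have hw0z : wedge 0 z.deg = 0 := by funext i; simp [wedge]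
    rw [hw0x, hw0z, hp, hpz, x.seg_id 0 (fun j => by simp),
      z.seg_id 0 (fun j => by simp), hx, hz]
  · show (0 : Fin k → ℕ) - wedge 0 x.deg = 0 - wedge 0 z.deg
    funext i; simp
end

section
/- Let Λ be a row-finite, locally convex k-graph. Suppose x ∈ Λ^{≤∞} and p, m, n ∈ ℕ^k satisfy (x;(p+m, p+m+l)) ≈ (x;(p+n, p+n+l)) for all l ∈ ℕ^k (equivalently, σ^m([x;(p,∞)]) = σ^n([x;(p,∞)]) as infinite paths of the desourcification of Λ). Then for each i ∈ {1,…,k}, if m_i ≠ n_i then d(x)_i = ∞. -/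
open scoped ENat

/-- If `σ^m([x;(p,∞)]) = σ^n([x;(p,∞)])`, i.e.
`(x;(p+m, p+m+l)) ≈ (x;(p+n, p+n+l))` for all `l`, then `d(x)_i = ∞`
whenever `m_i ≠ n_i`. -/
theorem deg_top_of_periodic (k : ℕ) (hk : 1 ≤ k) (Λ : KGraphData k)
    (hΛ : IsKGraph Λ) (hrf : RowFinite Λ) (hlc : LocallyConvex Λ)
    (x : BPath k Λ) (p m n : Fin k → ℕ)
    (h : ∀ l : Fin k → ℕ, PRel (x, p + m, p + m + l) (x, p + n, p + n + l)) :
    ∀ i : Fin k, m i ≠ n i → x.deg i = ⊤ := by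
  intro i hmn
  by_contra hne
  obtain ⟨a, ha⟩ := WithTop.ne_top_iff_exists.mp hne
  -- value of the wedge at coordinate i
  have hw : ∀ q : Fin k → ℕ, wedge q x.deg i = min (q i) a := by
    intro q
    have hcast : ((q i : ℕ∞) ⊓ x.deg i) = ((min (q i) a : ℕ) : ℕ∞) := by
      rw [← ha]
      rcases le_total (q i) a with hle | hle
      · rw [min_eq_left hle]
        exact inf_eq_left.mpr (Nat.cast_le.mpr hle)
      · rw [min_eq_right hle]
        exact inf_eq_right.mpr (Nat.cast_le.mpr hle)
    simp [wedge, hcast]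
  -- monotonicity of wedge in the first argument
  have hmono : ∀ q q' : Fin k → ℕ, q ≤ q' →
      wedge q x.deg ≤ wedge q' x.deg := by
    intro q q' hq j
    have : ((wedge q x.deg j : ℕ) : ℕ∞) ≤ ((wedge q' x.deg j : ℕ) : ℕ∞) := by
      rw [wedge_coe, wedge_coe]
      exact inf_le_inf_right _ (by exact_mod_cast hq j)
    exact_mod_cast this
  set l : Fin k → ℕ := fun _ => a with hl
  obtain ⟨h1, h2, -⟩ := h l
  have hle1 : (p + m : Fin k → ℕ) ≤ p + m + l := by
    intro j; simp [Pi.add_apply]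
  have hle2 : (p + n : Fin k → ℕ) ≤ p + n + l := by
    intro j; simp [Pi.add_apply]
  have dd := congrArg (fun f => Λ.d f i) h1
  simp only at dd
  rw [x.seg_deg _ _ (hmono _ _ hle1) (wedge_leDeg _ _),
    x.seg_deg _ _ (hmono _ _ hle2) (wedge_leDeg _ _)] at dd
  simp only [Pi.sub_apply] at dd
  have h2i := congrFun h2 i
  simp only [Pi.sub_apply] at h2i
  rw [hw, hw, hw, hw] at dd
  rw [hw, hw] at h2i
  simp only [Pi.add_apply, hl] at dd h2i
  omega
end

section
/- Let Λ be a row-finite, locally convex k-graph and suppose Λ has local periodicity m, n at v ∈ Λ^0 (where m ≠ n ∈ ℕ^k). Fix x ∈ vΛ^{≤∞} and set μ := x(0, m∧d(x)), α := x(m∧d(x), (m∨n)∧d(x)), and ν := x(0, n∧d(x)). Then d(μ) ≠ d(ν), and μαy = ναy for every boundary path y ∈ s(α)Λ^{≤∞} (where μαy and ναy denote the concatenations of the morphisms μα and να with y). -/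
open scoped ENat

section Helpers

lemma wedge_top {k : ℕ} (m : Fin k → ℕ) (dx : Fin k → ℕ∞) (i : Fin k) (h : dx i = ⊤) :
    wedge m dx i = m i := by simp [wedge, h]

lemma wedge_fin {k : ℕ} (m : Fin k → ℕ) (dx : Fin k → ℕ∞) (i : Fin k) (a : ℕ)
    (h : dx i = (a : ℕ∞)) : wedge m dx i = min (m i) a := by
  rcases le_total (m i) a with hle | hle
  · have h2 : (m i : ℕ∞) ⊓ (a : ℕ∞) = (m i : ℕ∞) := inf_eq_left.mpr (by exact_mod_cast hle)
    simp [wedge, h, h2, Nat.min_eq_left hle]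
  · have h2 : (m i : ℕ∞) ⊓ (a : ℕ∞) = (a : ℕ∞) := inf_eq_right.mpr (by exact_mod_cast hle)
    simp [wedge, h, h2, Nat.min_eq_right hle]

lemma leDeg_mono {k : ℕ} {a b : Fin k → ℕ} {D : Fin k → ℕ∞} (hab : a ≤ b)
    (h : leDeg k b D) : leDeg k a D :=
  fun i => le_trans (by exact_mod_cast hab i) (h i)

lemma leDeg_sub {k : ℕ} {P M : Fin k → ℕ} {D : Fin k → ℕ∞} (hP : leDeg k P D) (hMP : M ≤ P) :
    leDeg k (P - M) (fun i => D i - (M i : ℕ∞)) := by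
  intro i
  have e : ((P - M) i : ℕ∞) = (P i : ℕ∞) - (M i : ℕ∞) := by
    simp only [Pi.sub_apply]
    exact_mod_cast (ENat.coe_sub (P i) (M i))
  rw [e]
  exact tsub_le_tsub_right (hP i) _

lemma pile {k : ℕ} {a b : Fin k → ℕ} (h : a ≤ b) (i : Fin k) : a i ≤ b i := h i

lemma pige {k : ℕ} {a b : Fin k → ℕ} (h : ∀ i, a i ≤ b i) : a ≤ b := h

lemma comp_cancel {k : ℕ} {Λ : KGraphData k} (hΛ : IsKGraph Λ) {f g f' g' : Λ.Mor}
    (h1 : Λ.s f = Λ.r g) (h1' : Λ.s f' = Λ.r g') (hd : Λ.d f = Λ.d f')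
    (hc : Λ.comp f g = Λ.comp f' g') : f = f' ∧ g = g' := by
  have hdg : Λ.d g = Λ.d g' := by
    have e1 := hΛ.d_comp f g h1
    have e2 := hΛ.d_comp f' g' h1'
    have e3 : Λ.d f + Λ.d g = Λ.d f + Λ.d g' := by rw [← e1, hc, e2, hd]
    exact add_left_cancel e3
  obtain ⟨p, -, hu⟩ := hΛ.factor (Λ.comp f g) (Λ.d f) (Λ.d g) (hΛ.d_comp f g h1)
  have e1 := hu (f, g) ⟨h1, rfl, rfl, rfl⟩
  have e2 := hu (f', g') ⟨h1', hd.symm, hdg.symm, hc.symm⟩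
  have e3 : (f, g) = ((f', g') : Λ.Mor × Λ.Mor) := e1.trans e2.symm
  exact ⟨congrArg Prod.fst e3, congrArg Prod.snd e3⟩

lemma seg_transfer {k : ℕ} {Λ : KGraphData k} (hΛ : IsKGraph Λ) {u u' : BPath k Λ}
    {T : Fin k → ℕ} (hT : leDeg k T u.deg) (hT' : leDeg k T u'.deg)
    (hseg : u.seg 0 T = u'.seg 0 T) {a b : Fin k → ℕ} (hab : a ≤ b) (hbT : b ≤ T) :
    u.seg a b = u'.seg a b := by
  have haT : a ≤ T := le_trans hab hbT
  have h0a : (0 : Fin k → ℕ) ≤ a := fun i => Nat.zero_le _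
  have h0b : (0 : Fin k → ℕ) ≤ b := fun i => Nat.zero_le _
  have hau : leDeg k a u.deg := leDeg_mono haT hT
  have hau' : leDeg k a u'.deg := leDeg_mono haT hT'
  have hbu : leDeg k b u.deg := leDeg_mono hbT hT
  have hbu' : leDeg k b u'.deg := leDeg_mono hbT hT'
  have hc : Λ.comp (u.seg 0 a) (u.seg a T) = Λ.comp (u'.seg 0 a) (u'.seg a T) := by
    rw [u.seg_comp 0 a T h0a haT hT, u'.seg_comp 0 a T h0a haT hT', hseg]
  have hs : Λ.s (u.seg 0 a) = Λ.r (u.seg a T) := by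
    rw [u.seg_s 0 a h0a hau, u.seg_r a T haT hT]
  have hs' : Λ.s (u'.seg 0 a) = Λ.r (u'.seg a T) := by
    rw [u'.seg_s 0 a h0a hau', u'.seg_r a T haT hT']
  have hd : Λ.d (u.seg 0 a) = Λ.d (u'.seg 0 a) := by
    rw [u.seg_deg 0 a h0a hau, u'.seg_deg 0 a h0a hau']
  obtain ⟨-, haT2⟩ := comp_cancel hΛ hs hs' hd hc
  have hc2 : Λ.comp (u.seg a b) (u.seg b T) = Λ.comp (u'.seg a b) (u'.seg b T) := by
    rw [u.seg_comp a b T hab hbT hT, u'.seg_comp a b T hab hbT hT', haT2]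
  have hs2 : Λ.s (u.seg a b) = Λ.r (u.seg b T) := by
    rw [u.seg_s a b hab hbu, u.seg_r b T hbT hT]
  have hs2' : Λ.s (u'.seg a b) = Λ.r (u'.seg b T) := by
    rw [u'.seg_s a b hab hbu', u'.seg_r b T hbT hT']
  have hd2 : Λ.d (u.seg a b) = Λ.d (u'.seg a b) := by
    rw [u.seg_deg a b hab hbu, u'.seg_deg a b hab hbu']
  exact (comp_cancel hΛ hs2 hs2' hd2 hc2).1

end Helpers

/-- Suppose `Λ` has local periodicity `m, n` at `v` (`m ≠ n`),
`x ∈ vΛ^{≤∞}`, and set `μ := x(0, m∧d(x))`, `α := x(m∧d(x), (m∨n)∧d(x))`,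
`ν := x(0, n∧d(x))`. Then `d(μ) ≠ d(ν)`, and `μαy = ναy` for every boundary
path `y ∈ s(α)Λ^{≤∞}`. -/
theorem periodicity_factorisation (k : ℕ) (hk : 1 ≤ k) (Λ : KGraphData k)
    (hΛ : IsKGraph Λ) (hrf : RowFinite Λ) (hlc : LocallyConvex Λ)
    (v : Λ.Obj) (m n : Fin k → ℕ) (hmn : m ≠ n)
    (hlp : LocalPeriodicity Λ m n v) (x : BPath k Λ) (hx : x.vert 0 = v) :
    Λ.d (x.seg 0 (wedge m x.deg)) ≠ Λ.d (x.seg 0 (wedge n x.deg)) ∧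
    ∀ y z w : BPath k Λ,
      y.vert 0 = Λ.s (x.seg (wedge m x.deg) (wedge (m ⊔ n) x.deg)) →
      IsConcat Λ
        (Λ.comp (x.seg 0 (wedge m x.deg))
          (x.seg (wedge m x.deg) (wedge (m ⊔ n) x.deg))) y z →
      IsConcat Λ
        (Λ.comp (x.seg 0 (wedge n x.deg))
          (x.seg (wedge m x.deg) (wedge (m ⊔ n) x.deg))) y w →
      BPath.eqv z w := by
  classical
  obtain ⟨hA, hdegMN, hsegMN⟩ := hlp x hx
  set M := wedge m x.deg with hMdef
  set N := wedge n x.deg with hNdef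
  set P := wedge (m ⊔ n) x.deg with hPdef
  clear_value M N P
  have h0le : ∀ a : Fin k → ℕ, (0 : Fin k → ℕ) ≤ a := fun a i => Nat.zero_le _
  have hMx : leDeg k M x.deg := by rw [hMdef]; exact wedge_leDeg m x.deg
  have hNx : leDeg k N x.deg := by rw [hNdef]; exact wedge_leDeg n x.deg
  have hPx : leDeg k P x.deg := by rw [hPdef]; exact wedge_leDeg (m ⊔ n) x.deg
  -- if m i = n i then M i = N i
  have hMNgood : ∀ i, m i = n i → M i = N i := by
    intro i h
    rcases eq_or_ne (x.deg i) ⊤ with hd | hd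
    · rw [hMdef, hNdef, wedge_top m x.deg i hd, wedge_top n x.deg i hd, h]
    · obtain ⟨a, ha⟩ : ∃ a : ℕ, x.deg i = (a : ℕ∞) :=
        ⟨(x.deg i).toNat, (ENat.coe_toNat hd).symm⟩
      rw [hMdef, hNdef, wedge_fin m x.deg i a ha, wedge_fin n x.deg i a ha, h]
  -- if m i ≠ n i then x.deg i = ⊤
  have hbadtop : ∀ i, m i ≠ n i → x.deg i = ⊤ ∧ M i = m i ∧ N i = n i := by
    intro i hne
    rcases eq_or_ne (x.deg i) ⊤ with hd | hd
    · exact ⟨hd, by rw [hMdef]; exact wedge_top m x.deg i hd,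
        by rw [hNdef]; exact wedge_top n x.deg i hd⟩
    · exfalso
      obtain ⟨a, ha⟩ : ∃ a : ℕ, x.deg i = (a : ℕ∞) :=
        ⟨(x.deg i).toNat, (ENat.coe_toNat hd).symm⟩
      have hM : M i = min (m i) a := by rw [hMdef]; exact wedge_fin m x.deg i a ha
      have hN : N i = min (n i) a := by rw [hNdef]; exact wedge_fin n x.deg i a ha
      have hdi := congrFun hdegMN i
      simp only [BPath.shift] at hdi
      rw [← hMdef, ← hNdef, ha] at hdi
      have h1 : ((a - M i : ℕ) : ℕ∞) = ((a - N i : ℕ) : ℕ∞) := by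
        rw [ENat.coe_sub, ENat.coe_sub]; exact_mod_cast hdi
      have h2 : a - M i = a - N i := by exact_mod_cast h1
      have hAi := congrFun hA i
      simp only [Pi.sub_apply] at hAi
      omega
  have hP_MN : ∀ i, P i = max (M i) (N i) := by
    intro i
    rcases eq_or_ne (x.deg i) ⊤ with hd | hd
    · rw [hPdef, hMdef, hNdef, wedge_top _ x.deg i hd, wedge_top _ x.deg i hd,
        wedge_top _ x.deg i hd, Pi.sup_apply]
    · obtain ⟨a, ha⟩ : ∃ a : ℕ, x.deg i = (a : ℕ∞) :=
        ⟨(x.deg i).toNat, (ENat.coe_toNat hd).symm⟩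
      rw [hPdef, hMdef, hNdef, wedge_fin _ x.deg i a ha, wedge_fin _ x.deg i a ha,
        wedge_fin _ x.deg i a ha, Pi.sup_apply]
      have hsup : m i ⊔ n i = max (m i) (n i) := rfl
      rw [hsup]
      omega
  have hMP : M ≤ P := pige fun i => by have := hP_MN i; omega
  have hNP : N ≤ P := pige fun i => by have := hP_MN i; omega
  constructor
  · -- d(μ) ≠ d(ν)
    rw [x.seg_deg 0 M (h0le M) hMx, x.seg_deg 0 N (h0le N) hNx]
    intro hMN
    apply hmn
    funext i
    have hMNi : M i = N i := by
      have := congrFun hMN i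
      simp only [Pi.sub_apply, Pi.zero_apply, Nat.sub_zero] at this
      exact this
    by_cases h : m i = n i
    · exact h
    · obtain ⟨-, h1, h2⟩ := hbadtop i h
      rw [← h1, ← h2, hMNi]
  · intro y z w hy hz hw
    obtain ⟨hzdeg, hz0, hzcat⟩ := hz
    obtain ⟨hwdeg, hw0, hwcat⟩ := hw
    set Q := N + (P - M) with hQdef
    clear_value Q
    have hQgood : ∀ i, m i = n i → Q i = P i := by
      intro i h
      have h1 := hMNgood i h
      have h2 := hP_MN i
      have h3 := pile hMP i
      simp only [hQdef, Pi.add_apply, Pi.sub_apply]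
      omega
    have hQx : leDeg k Q x.deg := by
      intro i
      by_cases h : m i = n i
      · rw [hQgood i h]; exact hPx i
      · rw [(hbadtop i h).1]; exact le_top
    have hNQ : N ≤ Q := pige fun i => by
      simp only [hQdef, Pi.add_apply]; exact Nat.le_add_right _ _
    -- vertices agree
    have hvMN : x.vert M = x.vert N := by
      have h00 := hsegMN 0 0 le_rfl (fun i => by simp)
      simp only [BPath.shift, zero_add] at h00
      rw [← hMdef, ← hNdef] at h00
      rw [x.seg_id M hMx, x.seg_id N hNx] at h00
      have := congrArg Λ.r h00
      rwa [hΛ.r_id, hΛ.r_id] at this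
    -- α has two presentations
    have e2 : P - M + M = P := by
      funext i; have := pile hMP i; simp only [Pi.add_apply, Pi.sub_apply]; omega
    have e3 : P - M + N = Q := by
      funext i; simp only [hQdef, Pi.add_apply, Pi.sub_apply]; omega
    have halpha : x.seg M P = x.seg N Q := by
      have harg : leDeg k (P - M) ((x.shift (wedge m x.deg) (wedge_leDeg m x.deg)).deg) := by
        simp only [BPath.shift, ← hMdef]
        exact leDeg_sub hPx hMP
      have h1 := hsegMN 0 (P - M) (h0le _) harg
      simp only [BPath.shift, zero_add] at h1
      rw [← hMdef, ← hNdef] at h1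
      rwa [e2, e3] at h1
    -- source/range matching and degrees of the two big morphisms
    have hsMr : Λ.s (x.seg 0 M) = Λ.r (x.seg M P) := by
      rw [x.seg_s 0 M (h0le M) hMx, x.seg_r M P hMP hPx]
    have hsNr : Λ.s (x.seg 0 N) = Λ.r (x.seg M P) := by
      rw [x.seg_s 0 N (h0le N) hNx, x.seg_r M P hMP hPx]
      exact hvMN.symm
    have hd1 : Λ.d (Λ.comp (x.seg 0 M) (x.seg M P)) = P := by
      rw [hΛ.d_comp _ _ hsMr, x.seg_deg 0 M (h0le M) hMx, x.seg_deg M P hMP hPx]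
      funext i
      have := pile hMP i
      simp only [Pi.add_apply, Pi.sub_apply, Pi.zero_apply]
      omega
    have hd2 : Λ.d (Λ.comp (x.seg 0 N) (x.seg M P)) = Q := by
      rw [hΛ.d_comp _ _ hsNr, x.seg_deg 0 N (h0le N) hNx, x.seg_deg M P hMP hPx]
      funext i
      simp only [hQdef, Pi.add_apply, Pi.sub_apply, Pi.zero_apply]
      omega
    have hlam1 : Λ.comp (x.seg 0 M) (x.seg M P) = x.seg 0 P :=
      x.seg_comp 0 M P (h0le M) hMP hPx
    have hlam2 : Λ.comp (x.seg 0 N) (x.seg M P) = x.seg 0 Q := by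
      rw [halpha]; exact x.seg_comp 0 N Q (h0le N) hNQ hQx
    -- degree of z
    have hzde : ∀ i, z.deg i = (P i : ℕ∞) + y.deg i := by
      intro i
      rw [hzdeg, hd1]
    have hPz : leDeg k P z.deg := fun i => by rw [hzde i]; exact le_self_add
    have hMzle : leDeg k M z.deg := leDeg_mono hMP hPz
    have hyv : y.vert 0 = x.vert P := by
      rw [hy, x.seg_s M P hMP hPx]
    have hz0P : z.seg 0 P = x.seg 0 P := by
      have h1 := hz0
      rw [hd1] at h1
      rw [h1, hlam1]
    have hzv : z.vert 0 = v := by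
      have h1 := z.seg_r 0 P (h0le P) hPz
      rw [hz0P, x.seg_r 0 P (h0le P) hPx] at h1
      rw [← h1, hx]
    -- finite directions that are saturated have no extension in y
    have hyfin : ∀ i, (P i : ℕ∞) = x.deg i → y.deg i = 0 := by
      intro i hPi
      by_contra hne
      have h1 : leDeg k (Pi.single i 1) y.deg := by
        intro j
        rcases eq_or_ne j i with rfl | hji
        · simp only [Pi.single_eq_same, Nat.cast_one]
          exact ENat.one_le_iff_ne_zero.mpr hne
        · simp [Pi.single_apply, hji]
      have hre := y.seg_r 0 (Pi.single i 1) (h0le _) h1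
      have hde : Λ.d (y.seg 0 (Pi.single i 1)) = Pi.single i 1 := by
        rw [y.seg_deg 0 _ (h0le _) h1]
        funext j
        simp
      exact x.boundary P i hPx hPi _ (by rw [hre, hyv]) hde
    -- wedges with z.deg equal wedges with x.deg
    have hkeyw : ∀ l : Fin k → ℕ, (∀ i, l i ≤ max (m i) (n i)) →
        wedge l z.deg = wedge l x.deg := by
      intro l hl
      funext i
      have hPsup : P i = wedge (m ⊔ n) x.deg i := by rw [hPdef]
      rcases eq_or_ne (x.deg i) ⊤ with hd | hd
      · have hPi : P i = max (m i) (n i) := by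
          rw [hPsup, wedge_top _ x.deg i hd]; rfl
        rw [wedge_top l x.deg i hd]
        rcases eq_or_ne (z.deg i) ⊤ with h2 | h2
        · rw [wedge_top l z.deg i h2]
        · obtain ⟨b, hb⟩ : ∃ b : ℕ, z.deg i = (b : ℕ∞) :=
            ⟨(z.deg i).toNat, (ENat.coe_toNat h2).symm⟩
          rw [wedge_fin l z.deg i b hb]
          have h3 := hPz i
          rw [hb] at h3
          have h4 : P i ≤ b := by exact_mod_cast h3
          have := hl i
          omega
      · obtain ⟨a, ha⟩ : ∃ a : ℕ, x.deg i = (a : ℕ∞) :=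
          ⟨(x.deg i).toNat, (ENat.coe_toNat hd).symm⟩
        have hPi : P i = min (max (m i) (n i)) a := by
          rw [hPsup, wedge_fin _ x.deg i a ha]; rfl
        rw [wedge_fin l x.deg i a ha]
        by_cases hcase : l i ≤ P i
        · rcases eq_or_ne (z.deg i) ⊤ with h2 | h2
          · rw [wedge_top l z.deg i h2]
            have := hl i
            omega
          · obtain ⟨b, hb⟩ : ∃ b : ℕ, z.deg i = (b : ℕ∞) :=
              ⟨(z.deg i).toNat, (ENat.coe_toNat h2).symm⟩
            rw [wedge_fin l z.deg i b hb]
            have h3 := hPz i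
            rw [hb] at h3
            have h4 : P i ≤ b := by exact_mod_cast h3
            have := hl i
            omega
        · have hPa : P i = a := by have := hl i; omega
          have hy0 : y.deg i = 0 := hyfin i (by rw [ha, hPa])
          have hzfin : z.deg i = (a : ℕ∞) := by
            rw [hzde i, hy0, add_zero, hPa]
          rw [wedge_fin l z.deg i a hzfin]
    have hMz : wedge m z.deg = M := by
      rw [hMdef]; exact hkeyw m (fun i => le_max_left _ _)
    have hNz : wedge n z.deg = N := by
      rw [hNdef]; exact hkeyw n (fun i => le_max_right _ _)
    -- local periodicity applied to z
    obtain ⟨hA', hdeg', hseg'⟩ := hlp z hzv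
    have hdeg2 : ∀ i, z.deg i - (M i : ℕ∞) = z.deg i - (N i : ℕ∞) := by
      intro i
      have h1 := congrFun hdeg' i
      simp only [BPath.shift] at h1
      rw [hMz, hNz] at h1
      exact h1
    have hCz : ∀ p q : Fin k → ℕ, p ≤ q → leDeg k q (fun i => z.deg i - (M i : ℕ∞)) →
        z.seg (p + M) (q + M) = z.seg (p + N) (q + N) := by
      intro p q hpq hq
      have h2 : leDeg k q ((z.shift (wedge m z.deg) (wedge_leDeg m z.deg)).deg) := by
        simp only [BPath.shift]
        rw [hMz]
        exact hq
      have h3 := hseg' p q hpq h2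
      simp only [BPath.shift] at h3
      rw [hMz, hNz] at h3
      exact h3
    -- on coordinates where m ≠ n, y has infinite degree
    have hybad : ∀ i, m i ≠ n i → y.deg i = ⊤ := by
      intro i hne
      obtain ⟨hdx, hMi, hNi⟩ := hbadtop i hne
      by_contra h
      obtain ⟨b, hb⟩ : ∃ b : ℕ, y.deg i = (b : ℕ∞) :=
        ⟨(y.deg i).toNat, (ENat.coe_toNat h).symm⟩
      have hzfin : z.deg i = ((P i + b : ℕ) : ℕ∞) := by
        rw [hzde i, hb]
        push_cast
        rfl
      have h1 := hdeg2 i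
      rw [hzfin, hMi, hNi] at h1
      have h2 : ((P i + b - m i : ℕ) : ℕ∞) = ((P i + b - n i : ℕ) : ℕ∞) := by
        rw [ENat.coe_sub, ENat.coe_sub]; exact_mod_cast h1
      have h3 : P i + b - m i = P i + b - n i := by exact_mod_cast h2
      have h4 := hP_MN i
      omega
    have hwde : w.deg = z.deg := by
      funext i
      have ew : w.deg i = (Q i : ℕ∞) + y.deg i := by rw [hwdeg, hd2]
      rw [ew, hzde i]
      by_cases h : m i = n i
      · rw [hQgood i h]
      · rw [hybad i h]
        simp
    have hQz : leDeg k Q z.deg := by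
      intro i
      by_cases h : m i = n i
      · rw [hQgood i h]; exact hPz i
      · rw [hzde i, hybad i h]
        simp
    -- the key identity
    have hkeyR : ∀ R : Fin k → ℕ, P ≤ R → Q ≤ R → leDeg k R z.deg →
        z.seg 0 R = w.seg 0 R := by
      intro R hPR hQR hRz
      have hRw : leDeg k R w.deg := by rw [hwde]; exact hRz
      have hRQy : leDeg k (R - Q) y.deg := by
        intro i
        by_cases h : m i = n i
        · have hQPi := hQgood i h
          rcases eq_or_ne (y.deg i) ⊤ with h2 | h2
          · rw [h2]; exact le_top
          · obtain ⟨b, hb⟩ : ∃ b : ℕ, y.deg i = (b : ℕ∞) :=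
              ⟨(y.deg i).toNat, (ENat.coe_toNat h2).symm⟩
            have hR := hRz i
            rw [hzde i, hb] at hR
            have h3 : R i ≤ P i + b := by exact_mod_cast hR
            rw [hb]
            simp only [Pi.sub_apply]
            have h4 : R i - Q i ≤ b := by omega
            exact_mod_cast h4
        · rw [hybad i h]; exact le_top
      -- z side
      have hzNQ : z.seg 0 N = x.seg 0 N := seg_transfer hΛ hPz hPx hz0P (h0le N) hNP
      have hzMP : z.seg M P = x.seg M P := seg_transfer hΛ hPz hPx hz0P hMP le_rfl
      have hS1 : z.seg N Q = x.seg M P := by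
        have h1 := hCz 0 (P - M) (h0le _) (leDeg_sub hPz hMP)
        rw [zero_add, zero_add, e2, e3] at h1
        rw [← h1]
        exact hzMP
      have hz0Q : z.seg 0 Q = x.seg 0 Q := by
        have h1 := z.seg_comp 0 N Q (h0le N) hNQ hQz
        rw [hzNQ, hS1] at h1
        rw [← h1, hlam2]
      have hzQR : z.seg Q R = y.seg 0 (R - Q) := by
        have harg : leDeg k ((P - M) + (R - Q)) (fun i => z.deg i - (M i : ℕ∞)) := by
          intro i
          show (((P - M) + (R - Q)) i : ℕ∞) ≤ z.deg i - (M i : ℕ∞)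
          by_cases h : m i = n i
          · have hQPi := hQgood i h
            have hMle : (M i : ℕ∞) ≤ z.deg i := hMzle i
            rw [(ENat.addLECancellable_of_ne_top (ENat.coe_ne_top (M i))).le_tsub_iff_right
              hMle]
            have hval : ((P - M) + (R - Q)) i + M i = R i := by
              have h1 := pile hMP i
              have h2 := pile hQR i
              simp only [Pi.add_apply, Pi.sub_apply]
              omega
            have hcast := congrArg (Nat.cast : ℕ → ℕ∞) hval
            push_cast at hcast
            rw [hcast]
            exact hRz i
          · have hzt : z.deg i = ⊤ := by rw [hzde i, hybad i h]; simp
            rw [hzt]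
            simp
        have eA : (P - M) + (R - Q) + M = P + (R - Q) := by
          funext i
          have := pile hMP i
          simp only [Pi.add_apply, Pi.sub_apply]
          omega
        have eB : (P - M) + (R - Q) + N = R := by
          funext i
          have h1 := pile hMP i
          have h2 := pile hQR i
          have h3 : Q i = N i + (P i - M i) := by
            simp only [hQdef, Pi.add_apply, Pi.sub_apply]
          simp only [Pi.add_apply, Pi.sub_apply]
          omega
        have h1 := hCz (P - M) ((P - M) + (R - Q)) le_self_add harg
        rw [e2, eA, e3, eB] at h1
        have hcat := hzcat (R - Q) hRQy
        rw [hd1] at hcat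
        rw [← h1]
        exact hcat
      -- w side
      have hw0Q : w.seg 0 Q = x.seg 0 Q := by
        have h1 := hw0
        rw [hd2] at h1
        rw [h1, hlam2]
      have hwQR : w.seg Q R = y.seg 0 (R - Q) := by
        have h1 := hwcat (R - Q) hRQy
        rw [hd2] at h1
        have eC : Q + (R - Q) = R := by
          funext i
          have := pile hQR i
          simp only [Pi.add_apply, Pi.sub_apply]
          omega
        rwa [eC] at h1
      rw [← z.seg_comp 0 Q R (h0le Q) hQR hRz, ← w.seg_comp 0 Q R (h0le Q) hQR hRw,
        hz0Q, hzQR, hw0Q, hwQR]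
    -- conclude
    refine ⟨hwde.symm, ?_⟩
    intro p q hpq hq
    set R : Fin k → ℕ := fun i => max (q i) (max (P i) (Q i)) with hRdef
    clear_value R
    have hPR : P ≤ R := pige fun i => by simp only [hRdef]; omega
    have hQR : Q ≤ R := pige fun i => by simp only [hRdef]; omega
    have hqR : q ≤ R := pige fun i => by simp only [hRdef]; omega
    have hRz : leDeg k R z.deg := by
      intro i
      have h1 := hq i
      have h2 := hPz i
      have h3 := hQz i
      have h4 : R i = q i ∨ R i = P i ∨ R i = Q i := by simp only [hRdef]; omega
      rcases h4 with h | h | h <;> rw [h]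
      exacts [h1, h2, h3]
    have hRw : leDeg k R w.deg := by rw [hwde]; exact hRz
    exact seg_transfer hΛ hRz hRw (hkeyR R hPR hQR hRz) hpq hqR
end

section
/- Let Λ be a row-finite, locally convex k-graph. Let y ∈ Λ^{≤∞} and q ∈ ℕ^k be such that y(q∧d(y))Λ^{e_i} = ∅ whenever d(y)_i < ∞. Then for every boundary path z ∈ y(q∧d(y))Λ^{≤∞}, the concatenation y' := y(0, q∧d(y)) z is a boundary path of Λ satisfying q ∧ d(y') = q ∧ d(y) (and hence (y';q) ~ (y;q)). -/
open scoped ENat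

section Aux

variable {k : ℕ} {Λ : KGraphData k}

lemma sub_add_pf {u v : Fin k → ℕ} (h : u ≤ v) : v = u + (v - u) := by
  funext l
  simp only [Pi.add_apply, Pi.sub_apply]
  have : u l ≤ v l := h l
  omega

lemma deg_zero_eq_id (hΛ : IsKGraph Λ) {f : Λ.Mor} (hf : Λ.d f = 0) :
    f = Λ.idm (Λ.r f) ∧ Λ.s f = Λ.r f := by
  have h0 : Λ.d f = 0 + 0 := by simpa using hf
  obtain ⟨p, hp, hu⟩ := hΛ.factor f 0 0 h0
  have h1 : ((Λ.idm (Λ.r f), f) : Λ.Mor × Λ.Mor) = p :=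
    hu _ ⟨by rw [hΛ.s_id], by rw [hΛ.d_id], hf, hΛ.id_comp f⟩
  have h2 : ((f, Λ.idm (Λ.s f)) : Λ.Mor × Λ.Mor) = p :=
    hu _ ⟨(hΛ.r_id _).symm, hf, by rw [hΛ.d_id], hΛ.comp_id f⟩
  have hf' : f = Λ.idm (Λ.r f) := by
    have := congrArg Prod.fst (h1.trans h2.symm)
    exact this.symm
  refine ⟨hf', ?_⟩
  rw [hf', hΛ.s_id, hΛ.r_id]

lemma propagate (hΛ : IsKGraph Λ) (hlc : LocallyConvex Λ) (i : Fin k) :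
    ∀ (N : ℕ) (μ : Λ.Mor), (∑ j, Λ.d μ j) = N → Λ.d μ i = 0 →
    (∃ e, Λ.r e = Λ.r μ ∧ Λ.d e = Pi.single i 1) →
    ∃ e', Λ.r e' = Λ.s μ ∧ Λ.d e' = Pi.single i 1 := by
  intro N
  induction N using Nat.strong_induction_on with
  | _ N ih =>
    intro μ hsum hzero he
    by_cases hN : N = 0
    · have hd : Λ.d μ = 0 := by
        funext j
        have hall := Finset.sum_eq_zero_iff.mp (hsum.trans hN)
        exact hall j (Finset.mem_univ j)
      obtain ⟨_, hsr⟩ := deg_zero_eq_id hΛ hd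
      obtain ⟨e, her, hed⟩ := he
      exact ⟨e, by rw [hsr, her], hed⟩
    · obtain ⟨j, hj⟩ : ∃ j, Λ.d μ j ≠ 0 := by
        by_contra h
        push_neg at h
        exact hN (hsum.symm.trans (Finset.sum_eq_zero fun j _ => h j))
      have hij : j ≠ i := by
        intro h
        exact hj (h ▸ hzero)
      have hfac : Λ.d μ = Pi.single j 1 + (Λ.d μ - Pi.single j 1) := by
        funext l
        by_cases hl : l = j
        · subst hl
          simp only [Pi.add_apply, Pi.sub_apply, Pi.single_eq_same]
          omega
        · simp only [Pi.add_apply, Pi.sub_apply, Pi.single_eq_of_ne hl]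
          omega
      obtain ⟨⟨ν, ρ⟩, ⟨hsr, hdν, hdρ, hc⟩, _⟩ := hΛ.factor μ _ _ hfac
      obtain ⟨e, her, hed⟩ := he
      have hrν : Λ.r ν = Λ.r μ := by rw [← hc, hΛ.r_comp _ _ hsr]
      obtain ⟨⟨f, hfr, hfd⟩, -⟩ := hlc j i hij ν e hdν hed (by rw [hrν, her])
      have hdsum : Λ.d μ = Λ.d ν + Λ.d ρ := by rw [← hc, hΛ.d_comp _ _ hsr]
      have hsum' : (∑ l, Λ.d ρ l) < N := by
        have h1 : (∑ l, Λ.d μ l) = (∑ l, Λ.d ν l) + (∑ l, Λ.d ρ l) := by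
          rw [hdsum]
          exact Finset.sum_add_distrib
        have h2 : (∑ l, Λ.d ν l) ≠ 0 := by
          rw [hdν]
          intro h0
          have := Finset.sum_eq_zero_iff.mp h0 j (Finset.mem_univ j)
          simp at this
        omega
      have hρi : Λ.d ρ i = 0 := by
        have := congrFun hdρ i
        simp only [Pi.sub_apply, Pi.single_eq_of_ne hij] at this
        omega
      obtain ⟨e', he'r, he'd⟩ := ih _ hsum' ρ rfl hρi ⟨f, by rw [hfr, hsr], hfd⟩
      exact ⟨e', by rw [he'r, ← hΛ.s_comp _ _ hsr, hc], he'd⟩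

open Classical in
/-- The initial factor of degree `u` of a morphism `g`. -/
noncomputable def ini (hΛ : IsKGraph Λ) (g : Λ.Mor) (u : Fin k → ℕ) : Λ.Mor :=
  if h : u ≤ Λ.d g then
    (hΛ.factor g u (Λ.d g - u) (sub_add_pf h)).choose.1
  else g

lemma ini_spec (hΛ : IsKGraph Λ) {g : Λ.Mor} {u : Fin k → ℕ} (h : u ≤ Λ.d g) :
    ∃ w, Λ.s (ini hΛ g u) = Λ.r w ∧ Λ.d (ini hΛ g u) = u ∧ Λ.d w = Λ.d g - u ∧
      Λ.comp (ini hΛ g u) w = g := by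
  rw [ini, dif_pos h]
  obtain ⟨h1, h2, h3, h4⟩ := (hΛ.factor g u (Λ.d g - u) (sub_add_pf h)).choose_spec.1
  exact ⟨_, h1, h2, h3, h4⟩

lemma ini_eq (hΛ : IsKGraph Λ) {g : Λ.Mor} {u : Fin k → ℕ} (h : u ≤ Λ.d g)
    {A B : Λ.Mor} (h1 : Λ.s A = Λ.r B) (h2 : Λ.d A = u) (h3 : Λ.d B = Λ.d g - u)
    (h4 : Λ.comp A B = g) : ini hΛ g u = A := by
  rw [ini, dif_pos h]
  have := (hΛ.factor g u (Λ.d g - u) (sub_add_pf h)).choose_spec.2 (A, B) ⟨h1, h2, h3, h4⟩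
  exact (congrArg Prod.fst this).symm

lemma ini_deg (hΛ : IsKGraph Λ) {g : Λ.Mor} {u : Fin k → ℕ} (h : u ≤ Λ.d g) :
    Λ.d (ini hΛ g u) = u := by
  obtain ⟨w, h1, h2, h3, h4⟩ := ini_spec hΛ h
  exact h2

lemma ini_top (hΛ : IsKGraph Λ) (g : Λ.Mor) : ini hΛ g (Λ.d g) = g := by
  refine ini_eq hΛ le_rfl (B := Λ.idm (Λ.s g)) (hΛ.r_id _).symm rfl ?_ (hΛ.comp_id g)
  rw [hΛ.d_id]
  funext l
  simp

open Classical in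
/-- The segment of a morphism `g` from `u` to `v`. -/
noncomputable def seg2 (hΛ : IsKGraph Λ) (g : Λ.Mor) (u v : Fin k → ℕ) : Λ.Mor :=
  if h : u ≤ v ∧ v ≤ Λ.d g then
    (hΛ.factor (ini hΛ g v) u (v - u)
      ((ini_deg hΛ h.2).trans (sub_add_pf h.1))).choose.2
  else g

lemma seg2_eq (hΛ : IsKGraph Λ) {g : Λ.Mor} {u v : Fin k → ℕ} (huv : u ≤ v)
    (hv : v ≤ Λ.d g) {A B : Λ.Mor} (h1 : Λ.s A = Λ.r B) (h2 : Λ.d A = u)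
    (h3 : Λ.d B = v - u) (h4 : Λ.comp A B = ini hΛ g v) : seg2 hΛ g u v = B := by
  rw [seg2, dif_pos ⟨huv, hv⟩]
  have := (hΛ.factor (ini hΛ g v) u (v - u)
    ((ini_deg hΛ hv).trans (sub_add_pf huv))).choose_spec.2 (A, B) ⟨h1, h2, h3, h4⟩
  exact (congrArg Prod.snd this).symm

lemma seg2_spec (hΛ : IsKGraph Λ) {g : Λ.Mor} {u v : Fin k → ℕ} (huv : u ≤ v)
    (hv : v ≤ Λ.d g) :
    Λ.s (ini hΛ g u) = Λ.r (seg2 hΛ g u v) ∧ Λ.d (seg2 hΛ g u v) = v - u ∧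
      Λ.comp (ini hΛ g u) (seg2 hΛ g u v) = ini hΛ g v := by
  have hu : u ≤ Λ.d g := huv.trans hv
  obtain ⟨w, hw1, hw2, hw3, hw4⟩ := ini_spec hΛ hv
  have hC := (hΛ.factor (ini hΛ g v) u (v - u)
    ((ini_deg hΛ hv).trans (sub_add_pf huv))).choose_spec.1
  set C := (hΛ.factor (ini hΛ g v) u (v - u)
    ((ini_deg hΛ hv).trans (sub_add_pf huv))).choose with hCdef
  obtain ⟨hC1, hC2, hC3, hC4⟩ := hC
  have hseg : seg2 hΛ g u v = C.2 := by
    rw [seg2, dif_pos ⟨huv, hv⟩]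
  have hsC2 : Λ.s C.2 = Λ.r w := by
    rw [← hΛ.s_comp C.1 C.2 hC1, hC4, hw1]
  have hini : ini hΛ g u = C.1 := by
    refine ini_eq hΛ hu (B := Λ.comp C.2 w) ?_ hC2 ?_ ?_
    · rw [hΛ.r_comp C.2 w hsC2, hC1]
    · rw [hΛ.d_comp C.2 w hsC2, hC3, hw3]
      funext l
      simp only [Pi.add_apply, Pi.sub_apply]
      have h5 : u l ≤ v l := huv l
      have h6 : v l ≤ Λ.d g l := hv l
      omega
    · rw [← hΛ.assoc C.1 C.2 w hC1 hsC2, hC4, hw4]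
  rw [hseg, hini]
  exact ⟨hC1, hC3, hC4⟩

lemma seg2_r (hΛ : IsKGraph Λ) {g : Λ.Mor} {u v : Fin k → ℕ} (huv : u ≤ v)
    (hv : v ≤ Λ.d g) : Λ.r (seg2 hΛ g u v) = Λ.s (ini hΛ g u) :=
  ((seg2_spec hΛ huv hv).1).symm

lemma seg2_s (hΛ : IsKGraph Λ) {g : Λ.Mor} {u v : Fin k → ℕ} (huv : u ≤ v)
    (hv : v ≤ Λ.d g) : Λ.s (seg2 hΛ g u v) = Λ.s (ini hΛ g v) := by
  obtain ⟨h1, h2, h3⟩ := seg2_spec hΛ huv hv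
  rw [← h3, hΛ.s_comp _ _ h1]

lemma seg2_deg (hΛ : IsKGraph Λ) {g : Λ.Mor} {u v : Fin k → ℕ} (huv : u ≤ v)
    (hv : v ≤ Λ.d g) : Λ.d (seg2 hΛ g u v) = v - u :=
  (seg2_spec hΛ huv hv).2.1

lemma seg2_id (hΛ : IsKGraph Λ) {g : Λ.Mor} {u : Fin k → ℕ} (hu : u ≤ Λ.d g) :
    seg2 hΛ g u u = Λ.idm (Λ.s (ini hΛ g u)) := by
  refine seg2_eq hΛ le_rfl hu (A := ini hΛ g u) (hΛ.r_id _).symm (ini_deg hΛ hu) ?_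
    (hΛ.comp_id _)
  rw [hΛ.d_id]
  funext l
  simp

lemma seg2_comp (hΛ : IsKGraph Λ) {g : Λ.Mor} {u v w : Fin k → ℕ} (huv : u ≤ v)
    (hvw : v ≤ w) (hw : w ≤ Λ.d g) :
    Λ.comp (seg2 hΛ g u v) (seg2 hΛ g v w) = seg2 hΛ g u w := by
  have hv : v ≤ Λ.d g := hvw.trans hw
  obtain ⟨ha1, ha2, ha3⟩ := seg2_spec hΛ huv hv
  obtain ⟨hb1, hb2, hb3⟩ := seg2_spec hΛ hvw hw
  have hmid : Λ.s (seg2 hΛ g u v) = Λ.r (seg2 hΛ g v w) := by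
    rw [seg2_s hΛ huv hv, hb1]
  refine (seg2_eq hΛ (huv.trans hvw) hw (A := ini hΛ g u) ?_ (ini_deg hΛ (huv.trans hv))
    ?_ ?_).symm
  · rw [hΛ.r_comp _ _ hmid, ← ha1]
  · rw [hΛ.d_comp _ _ hmid, ha2, hb2]
    funext l
    simp only [Pi.add_apply, Pi.sub_apply]
    have h5 : u l ≤ v l := huv l
    have h6 : v l ≤ w l := hvw l
    omega
  · rw [← hΛ.assoc _ _ _ ha1 hmid, ha3, hb3]

lemma seg2_zero (hΛ : IsKGraph Λ) {g : Λ.Mor} {v : Fin k → ℕ} (hv : v ≤ Λ.d g) :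
    seg2 hΛ g 0 v = ini hΛ g v := by
  refine seg2_eq hΛ (fun l => Nat.zero_le _) hv (A := Λ.idm (Λ.r (ini hΛ g v)))
    (hΛ.s_id _) (hΛ.d_id _) ?_ (hΛ.id_comp _)
  rw [ini_deg hΛ hv]
  funext l
  simp

lemma seg2_last (hΛ : IsKGraph Λ) {A B : Λ.Mor} {m : Fin k → ℕ} (hA : Λ.d A = m)
    (hsr : Λ.s A = Λ.r B) : seg2 hΛ (Λ.comp A B) m (m + Λ.d B) = B := by
  have hd : Λ.d (Λ.comp A B) = m + Λ.d B := by rw [hΛ.d_comp _ _ hsr, hA]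
  have htop : ini hΛ (Λ.comp A B) (m + Λ.d B) = Λ.comp A B := by
    rw [← hd]
    exact ini_top hΛ _
  refine seg2_eq hΛ (fun l => Nat.le_add_right _ _) (le_of_eq hd.symm) hsr hA ?_ ?_
  · funext l
    simp only [Pi.add_apply, Pi.sub_apply]
    omega
  · exact htop.symm

lemma ini_prefix (hΛ : IsKGraph Λ) {g w : Λ.Mor} {u : Fin k → ℕ}
    (hsr : Λ.s g = Λ.r w) (hu : u ≤ Λ.d g) :
    ini hΛ (Λ.comp g w) u = ini hΛ g u := by
  have hdc : Λ.d (Λ.comp g w) = Λ.d g + Λ.d w := hΛ.d_comp g w hsr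
  have hu' : u ≤ Λ.d (Λ.comp g w) := by
    intro l
    have h5 : u l ≤ Λ.d g l := hu l
    rw [hdc]
    simp only [Pi.add_apply]
    omega
  obtain ⟨B, h1, h2, h3, h4⟩ := ini_spec hΛ hu
  have hsB : Λ.s B = Λ.r w := by
    rw [← hΛ.s_comp _ _ h1, h4, hsr]
  refine ini_eq hΛ hu' (B := Λ.comp B w) ?_ h2 ?_ ?_
  · rw [hΛ.r_comp B w hsB, h1]
  · rw [hΛ.d_comp B w hsB, h3, hdc]
    funext l
    simp only [Pi.add_apply, Pi.sub_apply]
    have h5 : u l ≤ Λ.d g l := hu l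
    omega
  · rw [← hΛ.assoc _ _ _ h1 hsB, h4]

lemma seg2_prefix (hΛ : IsKGraph Λ) {g w : Λ.Mor} {u v : Fin k → ℕ}
    (hsr : Λ.s g = Λ.r w) (huv : u ≤ v) (hv : v ≤ Λ.d g) :
    seg2 hΛ (Λ.comp g w) u v = seg2 hΛ g u v := by
  have hv' : v ≤ Λ.d (Λ.comp g w) := by
    intro l
    rw [hΛ.d_comp g w hsr]
    have h5 : v l ≤ Λ.d g l := hv l
    simp only [Pi.add_apply]
    omega
  obtain ⟨h1, h2, h3⟩ := seg2_spec hΛ huv hv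
  refine seg2_eq hΛ huv hv' h1 (ini_deg hΛ (huv.trans hv)) h2 ?_
  rw [h3, ini_prefix hΛ hsr hv]

end Aux
/-- Let `y ∈ Λ^{≤∞}` and `q ∈ ℕ^k` be such that
`y(q∧d(y))Λ^{e_i} = ∅` whenever `d(y)_i < ∞`. Then for every boundary path
`z ∈ y(q∧d(y))Λ^{≤∞}`, the concatenation `y' := y(0, q∧d(y)) z` is a boundary
path with `q ∧ d(y') = q ∧ d(y)` (hence `(y';q) ∼ (y;q)`). -/
theorem extend_boundary_path (k : ℕ) (hk : 1 ≤ k) (Λ : KGraphData k)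
    (hΛ : IsKGraph Λ) (hrf : RowFinite Λ) (hlc : LocallyConvex Λ)
    (y : BPath k Λ) (q : Fin k → ℕ)
    (hq : ∀ i : Fin k, y.deg i ≠ ⊤ →
      ∀ e : Λ.Mor, Λ.r e = y.vert (wedge q y.deg) → Λ.d e ≠ Pi.single i 1)
    (z : BPath k Λ) (hz : z.vert 0 = y.vert (wedge q y.deg)) :
    ∃ y' : BPath k Λ, IsConcat Λ (y.seg 0 (wedge q y.deg)) z y' ∧
      wedge q y'.deg = wedge q y.deg ∧ VRel (y', q) (y, q) := by
  classical
  set n := wedge q y.deg with hn_def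
  have hn : leDeg k n y.deg := by rw [hn_def]; exact wedge_leDeg q y.deg
  have hncoe : ∀ i, (n i : ℕ∞) = (q i : ℕ∞) ⊓ y.deg i := by
    rw [hn_def]; exact wedge_coe q y.deg
  have hnq : ∀ i, n i ≤ q i := by
    intro i
    have h1 : (n i : ℕ∞) ≤ (q i : ℕ∞) := by rw [hncoe i]; exact inf_le_left
    exact_mod_cast h1
  have h0n : (0 : Fin k → ℕ) ≤ n := fun i => Nat.zero_le _
  have h0zd : leDeg k 0 z.deg := fun j => by simp
  set lam := y.seg 0 n with hlam_def
  have hdlam : Λ.d lam = n := by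
    rw [hlam_def, y.seg_deg 0 n h0n hn]
    funext i
    simp
  have hslam : Λ.s lam = y.vert n := by rw [hlam_def]; exact y.seg_s 0 n h0n hn
  have hz0 : ∀ i, y.deg i ≠ ⊤ → z.deg i = 0 := by
    intro i hfin
    by_contra hne
    have h1 : leDeg k (Pi.single i 1) z.deg := by
      intro j
      by_cases hj : j = i
      · subst hj
        simp only [Pi.single_eq_same]
        exact ENat.one_le_iff_ne_zero.mpr hne
      · simp [Pi.single_eq_of_ne hj]
    have h0le : (0 : Fin k → ℕ) ≤ Pi.single i 1 := fun j => Nat.zero_le _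
    have hre : Λ.r (z.seg 0 (Pi.single i 1)) = y.vert n := by
      rw [z.seg_r 0 _ h0le h1, hz]
    have hde : Λ.d (z.seg 0 (Pi.single i 1)) = Pi.single i 1 := by
      rw [z.seg_deg 0 _ h0le h1]
      funext j
      simp
    exact hq i hfin _ hre hde
  set D : Fin k → ℕ∞ := fun i => (n i : ℕ∞) + z.deg i with hD_def
  have hb : ∀ T : Fin k → ℕ, leDeg k T D → leDeg k (fun j => T j - n j) z.deg := by
    intro T hT j
    have h1 := hT j
    simp only [hD_def] at h1
    rcases eq_or_ne (z.deg j) ⊤ with h | h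
    · rw [h]; exact le_top
    · lift z.deg j to ℕ using h with c hc
      have h2 : T j ≤ n j + c := by exact_mod_cast h1
      have h3 : T j - n j ≤ c := by omega
      exact_mod_cast h3
  set g : (Fin k → ℕ) → Λ.Mor :=
    fun T => Λ.comp lam (z.seg 0 (fun j => T j - n j)) with hg_def
  have hzr : ∀ T : Fin k → ℕ, leDeg k T D →
      Λ.s lam = Λ.r (z.seg 0 (fun j => T j - n j)) := by
    intro T hT
    rw [z.seg_r 0 _ (fun j => Nat.zero_le _) (hb T hT), hz, hslam]
  have hdg : ∀ T : Fin k → ℕ, n ≤ T → leDeg k T D → Λ.d (g T) = T := by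
    intro T hnT hT
    simp only [hg_def]
    rw [hΛ.d_comp _ _ (hzr T hT), hdlam,
      z.seg_deg 0 _ (fun j => Nat.zero_le _) (hb T hT)]
    funext j
    simp only [Pi.add_apply, Pi.sub_apply, Pi.zero_apply]
    have h1 : n j ≤ T j := hnT j
    omega
  have hsupD : ∀ p : Fin k → ℕ, leDeg k p D → leDeg k (p ⊔ n) D := by
    intro p hp j
    have h1 := hp j
    have h2 : ((p ⊔ n) j : ℕ) = max (p j) (n j) := rfl
    rw [h2]
    rcases le_total (p j) (n j) with h | h
    · rw [max_eq_right h]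
      simp only [hD_def]
      exact le_self_add
    · rw [max_eq_left h]
      exact h1
  have hsplit : ∀ T T' : Fin k → ℕ, n ≤ T → T ≤ T' → leDeg k T' D →
      g T' = Λ.comp (g T) (z.seg (fun j => T j - n j) (fun j => T' j - n j)) ∧
      Λ.s (g T) = Λ.r (z.seg (fun j => T j - n j) (fun j => T' j - n j)) := by
    intro T T' hnT hTT' hT'
    have hT : leDeg k T D := fun j => le_trans (by exact_mod_cast hTT' j) (hT' j)
    have hbT := hb T hT
    have hbT' := hb T' hT'
    have hbb : (fun j => T j - n j) ≤ (fun j => T' j - n j) := by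
      intro j
      have h1 : T j ≤ T' j := hTT' j
      simp only
      omega
    have hz1 : Λ.comp (z.seg 0 (fun j => T j - n j))
        (z.seg (fun j => T j - n j) (fun j => T' j - n j)) =
        z.seg 0 (fun j => T' j - n j) :=
      z.seg_comp 0 _ _ (fun j => Nat.zero_le _) hbb hbT'
    have hmid : Λ.s (z.seg 0 (fun j => T j - n j)) =
        Λ.r (z.seg (fun j => T j - n j) (fun j => T' j - n j)) := by
      rw [z.seg_s 0 _ (fun j => Nat.zero_le _) hbT, z.seg_r _ _ hbb hbT']
    have hgs : Λ.s (g T) =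
        Λ.r (z.seg (fun j => T j - n j) (fun j => T' j - n j)) := by
      simp only [hg_def]
      rw [hΛ.s_comp _ _ (hzr T hT)]
      exact hmid
    refine ⟨?_, hgs⟩
    simp only [hg_def]
    rw [hΛ.assoc _ _ _ (hzr T hT) hmid, hz1]
  have hvalid : ∀ q' : Fin k → ℕ, leDeg k q' D → q' ≤ Λ.d (g (q' ⊔ n)) := by
    intro q' hq'
    rw [hdg (q' ⊔ n) le_sup_right (hsupD q' hq')]
    exact le_sup_left
  have hini_eq : ∀ p q' : Fin k → ℕ, p ≤ q' → leDeg k q' D →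
      ini hΛ (g (q' ⊔ n)) p = ini hΛ (g (p ⊔ n)) p := by
    intro p q' hpq hq'
    have hp : leDeg k p D := fun j => le_trans (by exact_mod_cast hpq j) (hq' j)
    obtain ⟨he, hs⟩ := hsplit (p ⊔ n) (q' ⊔ n) le_sup_right
      (sup_le_sup_right hpq n) (hsupD q' hq')
    rw [he]
    exact ini_prefix hΛ hs (hvalid p hp)
  have Hr : ∀ p q' : Fin k → ℕ, p ≤ q' → leDeg k q' D →
      Λ.r (seg2 hΛ (g (q' ⊔ n)) p q') = Λ.s (ini hΛ (g (p ⊔ n)) p) := by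
    intro p q' hpq hq'
    rw [seg2_r hΛ hpq (hvalid q' hq'), hini_eq p q' hpq hq']
  have Hs : ∀ p q' : Fin k → ℕ, p ≤ q' → leDeg k q' D →
      Λ.s (seg2 hΛ (g (q' ⊔ n)) p q') = Λ.s (ini hΛ (g (q' ⊔ n)) q') := by
    intro p q' hpq hq'
    exact seg2_s hΛ hpq (hvalid q' hq')
  have Hd : ∀ p q' : Fin k → ℕ, p ≤ q' → leDeg k q' D →
      Λ.d (seg2 hΛ (g (q' ⊔ n)) p q') = q' - p := by
    intro p q' hpq hq'
    exact seg2_deg hΛ hpq (hvalid q' hq')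
  have Hid : ∀ p : Fin k → ℕ, leDeg k p D →
      seg2 hΛ (g (p ⊔ n)) p p = Λ.idm (Λ.s (ini hΛ (g (p ⊔ n)) p)) := by
    intro p hp
    exact seg2_id hΛ (hvalid p hp)
  have Hcomp : ∀ p q' t : Fin k → ℕ, p ≤ q' → q' ≤ t → leDeg k t D →
      Λ.comp (seg2 hΛ (g (q' ⊔ n)) p q') (seg2 hΛ (g (t ⊔ n)) q' t) =
        seg2 hΛ (g (t ⊔ n)) p t := by
    intro p q' t hpq hq't ht
    have hq' : leDeg k q' D := fun j => le_trans (by exact_mod_cast hq't j) (ht j)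
    obtain ⟨he, hs⟩ := hsplit (q' ⊔ n) (t ⊔ n) le_sup_right
      (sup_le_sup_right hq't n) (hsupD t ht)
    rw [show seg2 hΛ (g (q' ⊔ n)) p q' = seg2 hΛ (g (t ⊔ n)) p q' from by
      rw [he, seg2_prefix hΛ hs hpq (hvalid q' hq')]]
    exact seg2_comp hΛ hpq hq't (hvalid t ht)
  have hini_full : ∀ G : Λ.Mor, ∀ T : Fin k → ℕ, Λ.d G = T → ini hΛ G T = G := by
    intro G T hG
    rw [← hG]
    exact ini_top hΛ G
  have Hbound : ∀ (p : Fin k → ℕ) (i : Fin k), leDeg k p D → (p i : ℕ∞) = D i →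
      ∀ e : Λ.Mor, Λ.r e = Λ.s (ini hΛ (g (p ⊔ n)) p) →
        Λ.d e ≠ Pi.single i 1 := by
    intro p i hp hpi e her hed
    have hpi' : (p i : ℕ∞) = (n i : ℕ∞) + z.deg i := by
      rw [hpi]
    have hfin : z.deg i ≠ ⊤ := by
      intro htop
      rw [htop, add_top] at hpi'
      exact (ENat.coe_ne_top (p i)) hpi'
    set c := (z.deg i).toNat with hc_def
    have hc : (c : ℕ∞) = z.deg i := ENat.coe_toNat hfin
    have hpn_i : p i = n i + c := by
      rw [← hc] at hpi'
      exact_mod_cast hpi'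
    have hsup_le : leDeg k (p ⊔ n) D := hsupD p hp
    have hpq : p ≤ p ⊔ n := le_sup_left
    have hsups : (p ⊔ n) ⊔ n = p ⊔ n := by rw [sup_assoc, sup_idem]
    set μ := seg2 hΛ (g (p ⊔ n)) p (p ⊔ n) with hμ_def
    have hrμ : Λ.r μ = Λ.s (ini hΛ (g (p ⊔ n)) p) := by
      have h1 := Hr p (p ⊔ n) hpq hsup_le
      rw [hsups] at h1
      exact h1
    have hsμ : Λ.s μ = Λ.s (ini hΛ (g (p ⊔ n)) (p ⊔ n)) := by
      have h1 := Hs p (p ⊔ n) hpq hsup_le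
      rw [hsups] at h1
      exact h1
    have hdμ : Λ.d μ = (p ⊔ n) - p := by
      have h1 := Hd p (p ⊔ n) hpq hsup_le
      rw [hsups] at h1
      exact h1
    have hdμi : Λ.d μ i = 0 := by
      rw [hdμ]
      simp only [Pi.sub_apply, Pi.sup_apply]
      have h1 : n i ≤ p i := by omega
      rw [sup_eq_left.mpr h1]
      omega
    obtain ⟨e', he'r, he'd⟩ := propagate hΛ hlc i (∑ j, Λ.d μ j) μ rfl hdμi
      ⟨e, her.trans hrμ.symm, hed⟩
    have htopv : Λ.s μ = z.vert (fun j => p j - n j) := by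
      rw [hsμ, hini_full _ _ (hdg _ le_sup_right hsup_le)]
      simp only [hg_def]
      rw [hΛ.s_comp _ _ (hzr (p ⊔ n) hsup_le),
        z.seg_s 0 _ (fun j => Nat.zero_le _) (hb (p ⊔ n) hsup_le)]
      congr 1
      funext j
      simp only [Pi.sup_apply]
      rcases le_total (p j) (n j) with h | h
      · rw [sup_eq_right.mpr h]
        omega
      · rw [sup_eq_left.mpr h]
    have hble : leDeg k (fun j => p j - n j) z.deg := hb p hp
    have hbi : (((fun j => p j - n j) i : ℕ) : ℕ∞) = z.deg i := by
      simp only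
      rw [← hc]
      have h1 : p i - n i = c := by omega
      rw [h1]
    exact z.boundary (fun j => p j - n j) i hble hbi e'
      (by rw [he'r, htopv]) he'd
  -- abbreviations for the final computations
  have harg0 : (fun j => n j - n j) = (0 : Fin k → ℕ) := by
    funext j
    simp
  have hg_n : g n = lam := by
    simp only [hg_def]
    rw [harg0, z.seg_id 0 h0zd, hz, ← hslam, hΛ.comp_id]
  have hini_lam : ini hΛ lam n = lam := hini_full lam n hdlam
  have hwedge : wedge q D = n := by
    funext i
    show ((q i : ℕ∞) ⊓ D i).toNat = n i
    rcases eq_or_ne (y.deg i) ⊤ with h | h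
    · have hni : n i = q i := by
        have h2 := hncoe i
        rw [h, inf_top_eq] at h2
        exact_mod_cast h2
      have h3 : (q i : ℕ∞) ⊓ D i = (q i : ℕ∞) := by
        apply inf_eq_left.mpr
        simp only [hD_def]
        rw [← hni]
        exact le_self_add
      rw [h3, hni]
      simp
    · have hzi : z.deg i = 0 := hz0 i h
      have h3 : D i = (n i : ℕ∞) := by
        simp only [hD_def]
        rw [hzi, add_zero]
      have h4 : (q i : ℕ∞) ⊓ D i = (n i : ℕ∞) := by
        rw [h3]
        exact inf_eq_right.mpr (by exact_mod_cast hnq i)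
      rw [h4]
      simp
  have c1 : D = fun i => (Λ.d lam i : ℕ∞) + z.deg i := by
    funext i
    simp only [hD_def]
    rw [hdlam]
  have c2 : seg2 hΛ (g (Λ.d lam ⊔ n)) 0 (Λ.d lam) = lam := by
    rw [hdlam, sup_idem, hg_n, seg2_zero hΛ hdlam.ge,
      hini_lam]
  have c3 : ∀ p : Fin k → ℕ, leDeg k p z.deg →
      seg2 hΛ (g ((Λ.d lam + p) ⊔ n)) (Λ.d lam) (Λ.d lam + p) = z.seg 0 p := by
    intro p hp
    rw [hdlam]
    have hnp_sup : (n + p) ⊔ n = n + p :=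
      sup_eq_left.mpr (fun j => Nat.le_add_right _ _)
    rw [hnp_sup]
    have harg : (fun j => (n + p) j - n j) = p := by
      funext j
      simp only [Pi.add_apply]
      omega
    have hgeq : g (n + p) = Λ.comp lam (z.seg 0 p) := by
      simp only [hg_def]
      rw [harg]
    rw [hgeq]
    have hsr : Λ.s lam = Λ.r (z.seg 0 p) := by
      rw [z.seg_r 0 p (fun j => Nat.zero_le _) hp, hz, hslam]
    have hdz : Λ.d (z.seg 0 p) = p := by
      rw [z.seg_deg 0 p (fun j => Nat.zero_le _) hp]
      funext j
      simp
    have h5 := seg2_last hΛ hdlam hsr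
    rw [hdz] at h5
    exact h5
  refine ⟨⟨D, fun p => Λ.s (ini hΛ (g (p ⊔ n)) p),
    fun p q' => seg2 hΛ (g (q' ⊔ n)) p q', Hr, Hs, Hd, Hid, Hcomp, Hbound⟩,
    ⟨c1, c2, c3⟩, hwedge.trans hn_def, ?_, ?_⟩
  · show Λ.s (ini hΛ (g (wedge q D ⊔ n)) (wedge q D)) = y.vert (wedge q y.deg)
    rw [hwedge, sup_idem, hg_n, hini_lam, hslam, hn_def]
  · show q - wedge q D = q - wedge q y.deg
    rw [hwedge, hn_def]
end
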